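/- There exists a resilient supervisor S^R for the attacked closed-loop system G^R with respect to Σ_{c,v} and G_robust if and only if the attacked system Sa/Ga is AE-robust recoverable with respect to G_robust. -/

import Mathlib

/-!
Common formalization of supervisory control of DES under actuator-enablement
attacks, following the natural-language context.

* A plant is a DFA with partial transition function `f : X → E → Option X`
  and initial state `x0`; `runFrom` extends `f` to strings; `Lang f x0` is the
  generated language.
* A strict subautomaton of an automaton is represented by its state set
  `Q : Set X`, with induced transition function `subStep f Q`.
* Attacked events are modelled by the alphabet `E ⊕ E`: `Sum.inl e` is the
  ordinary event `e`, `Sum.inr e` is the attacked copy `eᵃ` (meaningful for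
  `e ∈ Scv`).
* The attacked plant `gaStep`, attacked supervisor `saStep` (state `none`
  playing the role of the fresh state `A`), and their synchronous composition
  `grStep` (the attacked closed-loop system `G^R = Sa ∥ Ga`) are defined below,
  together with detection states, robust-recovery, the resilient specification
  `Ha`, supervisors for `G^R`, and resilience.
-/

open Classical List

namespace RobustRec

variable {X : Type*} {E : Type*}

/-- Extension of a partial transition function to strings. -/
def runFrom (f : X → E → Option X) : X → List E → Option X
  | x, [] => some x
  | x, e :: w => (f x e).bind fun y => runFrom f y w

/-- Language generated from state `x0`. -/
def Lang (f : X → E → Option X) (x0 : X) : Set (List E) :=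
  {w | (runFrom f x0 w).isSome}

/-- Transition function of the strict (induced) subautomaton with state set `Q`:
a transition is defined iff it is defined in the big automaton and both its
endpoints lie in `Q`. -/
noncomputable def subStep (f : X → E → Option X) (Q : Set X) : X → E → Option X :=
  fun x e => (f x e).bind fun y => if x ∈ Q ∧ y ∈ Q then some y else none

/-- Vulnerable states: those where some vulnerable controllable event is feasible. -/
def vulnStates (f : X → E → Option X) (Scv : Set E) : Set X :=
  {x | ∃ e ∈ Scv, (f x e).isSome}

/-- A supervisor for the plant `(f, x0)`, represented by its state set `XS`
(the induced strict subautomaton): it contains `x0`, is controllable w.r.t.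
the uncontrollable events `Suc`, and is safe w.r.t. the unsafe states `XUS`. -/
structure IsSupervisor (f : X → E → Option X) (x0 : X) (Suc : Set E)
    (XUS : Set X) (XS : Set X) : Prop where
  init_mem : x0 ∈ XS
  controllable : ∀ x ∈ XS, ∀ e ∈ Suc, ∀ y, f x e = some y → y ∈ XS
  safe : ∀ x ∈ XS, x ∉ XUS

/-- The attacked plant `Ga`: all transitions of `G`, plus, for every transition
on a vulnerable event `σ ∈ Scv`, a parallel transition on its attacked copy. -/
noncomputable def gaStep (f : X → E → Option X) (Scv : Set E) :
    X → E ⊕ E → Option X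
  | x, Sum.inl e => f x e
  | x, Sum.inr e => if e ∈ Scv then f x e else none

/-- The attacked supervisor `Sa`: states are `some x` for states `x` of `S`
plus the fresh state `A = none` with a self-loop on every event; for every
state `x` of `S` and `σ ∈ Scv` with `f_S(x,σ)` undefined there is a transition
on `σᵃ` from `x` to `A`. -/
noncomputable def saStep (f : X → E → Option X) (XS : Set X) (Scv : Set E) :
    Option X → E ⊕ E → Option (Option X)
  | none, _ => some none
  | some x, Sum.inl e => (subStep f XS x e).map some
  | some x, Sum.inr e =>
      if e ∈ Scv ∧ x ∈ XS ∧ subStep f XS x e = none then some none else none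

/-- Synchronous composition of two automata over a common alphabet. -/
def prodStep {X1 X2 A : Type*} (f1 : X1 → A → Option X1) (f2 : X2 → A → Option X2) :
    X1 × X2 → A → Option (X1 × X2) :=
  fun p a => (f1 p.1 a).bind fun y1 => (f2 p.2 a).map fun y2 => (y1, y2)

/-- The attacked closed-loop system `G^R = Sa ∥ Ga`. Its post-attack states are
those of the form `(none, x)`, i.e. `(A, x)`. -/
noncomputable def grStep (f : X → E → Option X) (XS : Set X) (Scv : Set E) :
    Option X × X → E ⊕ E → Option (Option X × X) :=
  prodStep (saStep f XS Scv) (gaStep f Scv)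

/-- Initial state of `G^R`. -/
def grInit (x0 : X) : Option X × X := (some x0, x0)

/-- Embedding of strings over `Σ` into strings over `Σ ∪ Σᵃ_{c,v}`. -/
def embed : List E → List (E ⊕ E) := List.map Sum.inl

/-- The language `L(Sa/Ga)` of the attacked closed-loop system. -/
noncomputable def GRLang (f : X → E → Option X) (x0 : X) (XS : Set X) (Scv : Set E) :
    Set (List (E ⊕ E)) :=
  Lang (grStep f XS Scv) (grInit x0)

/-- The detection language `L_det = {sσ ∈ L(G) | s ∈ L(S/G), σ ∈ Σ_{c,v},
sσᵃ ∈ L(Sa/Ga)}`. -/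
noncomputable def detLang (f : X → E → Option X) (x0 : X) (XS : Set X) (Scv : Set E) :
    Set (List E) :=
  {w | ∃ s σ, w = s ++ [σ] ∧ σ ∈ Scv ∧ w ∈ Lang f x0 ∧
        s ∈ Lang (subStep f XS) x0 ∧ embed s ++ [Sum.inr σ] ∈ GRLang f x0 XS Scv}

/-- The detection states `X_det = {f(x0, sσ) : sσ ∈ L_det}`. -/
noncomputable def detStates (f : X → E → Option X) (x0 : X) (XS : Set X) (Scv : Set E) :
    Set X :=
  {x | ∃ w ∈ detLang f x0 XS Scv, runFrom f x0 w = some x}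

/-- `r` is a robust-recovery strategy from `x` relative to the candidate set `R`
of recoverable states, the robust region `XR` and the bad states
`Bad = X_v ∪ X_US`: (1) `r` leads into `XR`; (2) no prefix of `r` visits `Bad`;
(3) no prefix of `r` can uncontrollably reach `Bad`; (4) any one-step
uncontrollable deviation from `r` lands in `R`. -/
def IsRecoveryPath (f : X → E → Option X) (Suc : Set E) (XR Bad : Set X)
    (R : Set X) (x : X) (r : List E) : Prop :=
  (∃ y ∈ XR, runFrom f x r = some y) ∧
  (∀ t, t <+: r → ∀ y, runFrom f x t = some y → y ∉ Bad) ∧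
  (∀ t, t <+: r → ∀ u : List E, (∀ e ∈ u, e ∈ Suc) →
      ∀ y, runFrom f x (t ++ u) = some y → y ∉ Bad) ∧
  (∀ t, t <+: r → ∀ e ∈ Suc, ∀ y, runFrom f x (t ++ [e]) = some y →
      ¬ (t ++ [e]) <+: r → y ∈ R)

/-- The set `R` of AE-robust recoverable states: the largest subset of
`X \ Bad` each of whose elements admits a robust-recovery strategy (relative
to the set itself). -/
def recSet (f : X → E → Option X) (Suc : Set E) (XR Bad : Set X) : Set X :=
  ⋃₀ {R | R ⊆ Badᶜ ∧ ∀ x ∈ R, ∃ r, IsRecoveryPath f Suc XR Bad R x r}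

/-- The attacked system `Sa/Ga` is AE-robust recoverable w.r.t. the robust
region `XR` if every detection state is AE-robust recoverable. -/
noncomputable def AERobustRecoverable (f : X → E → Option X) (x0 : X)
    (Suc Scv : Set E) (XUS XS XR : Set X) : Prop :=
  detStates f x0 XS Scv ⊆ recSet f Suc XR (vulnStates f Scv ∪ XUS)

/-- Reachable states of `G^R` (the state set of the synchronous composition). -/
noncomputable def grStates (f : X → E → Option X) (x0 : X) (XS : Set X) (Scv : Set E) :
    Set (Option X × X) :=
  {p | ∃ w, runFrom (grStep f XS Scv) (grInit x0) w = some p}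

/-- A supervisor for `G^R`, represented by its state set `Q` (inducing a strict
subautomaton of `G^R`): it contains the initial state and is controllable
w.r.t. `Suc` (attacked events being controllable). -/
structure IsGRSupervisor (f : X → E → Option X) (x0 : X) (Suc Scv : Set E)
    (XS : Set X) (Q : Set (Option X × X)) : Prop where
  subset : Q ⊆ grStates f x0 XS Scv
  init_mem : grInit x0 ∈ Q
  controllable : ∀ p ∈ Q, ∀ e ∈ Suc, ∀ q, grStep f XS Scv p (Sum.inl e) = some q → q ∈ Q

/-- State set of the resilient specification `Ha`: `G^R` minus every post-attack
state `(A, x)` with `x ∈ X_v ∪ X_US`. -/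
def haCarrier (f : X → E → Option X) (Scv : Set E) (XUS : Set X) :
    Set (Option X × X) :=
  {p | ¬ (p.1 = none ∧ p.2 ∈ vulnStates f Scv ∪ XUS)}

/-- Marked states of `Ha`: post-attack states `(A, x)` with `x` in the robust
region. -/
def haMarked (XR : Set X) : Set (Option X × X) :=
  {p | p.1 = (none : Option X) ∧ p.2 ∈ XR}

/-- The closed-loop language `L(S^R/G^R) = L(S^R)` of a supervisor `Q` for `G^R`. -/
noncomputable def SRLang (f : X → E → Option X) (x0 : X) (XS : Set X) (Scv : Set E)
    (Q : Set (Option X × X)) : Set (List (E ⊕ E)) :=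
  Lang (subStep (grStep f XS Scv) Q) (grInit x0)

/-- `S^R` is safe w.r.t. the resilient specification `Ha`: `L(S^R) ⊆ L(Ha)`. -/
noncomputable def SafeWrtHa (f : X → E → Option X) (x0 : X) (XS : Set X)
    (Scv : Set E) (XUS : Set X) (Q : Set (Option X × X)) : Prop :=
  SRLang f x0 XS Scv Q ⊆
    Lang (subStep (grStep f XS Scv) (haCarrier f Scv XUS)) (grInit x0)

/-- `S^R` is nonblocking: from every post-attack state of `S^R`, a marked state
of `Ha` is reachable within `S^R`. -/
noncomputable def NonblockingSR (f : X → E → Option X) (XS : Set X) (Scv : Set E)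
    (XR : Set X) (Q : Set (Option X × X)) : Prop :=
  ∀ p ∈ Q, p.1 = (none : Option X) →
    ∃ w q, runFrom (subStep (grStep f XS Scv) Q) p w = some q ∧ q ∈ haMarked XR

/-- `S^R` is maximally permissive among safe nonblocking supervisors for `G^R`. -/
noncomputable def MaxPermissive (f : X → E → Option X) (x0 : X) (Suc Scv : Set E)
    (XS XUS XR : Set X) (Q : Set (Option X × X)) : Prop :=
  ∀ Q', IsGRSupervisor f x0 Suc Scv XS Q' → SafeWrtHa f x0 XS Scv XUS Q' →
    NonblockingSR f XS Scv XR Q' → SRLang f x0 XS Scv Q' ⊆ SRLang f x0 XS Scv Q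

/-- `S^R` (given by its state set `Q`) is resilient w.r.t. `Scv` and the robust
region `XR`: it permits the full nominal behavior `L(S/G)`, and after any
AE-attack `sσᵃ` feasible in `L(Sa/Ga)` it permits the attack, keeps all its
subsequent behavior out of `Bad = X_v ∪ X_US`, and can always be extended
within `L(S^R)` to reach a post-attack state `(A, x)` with `x ∈ XR`; i.e. it
enforces a robust-recovery strategy from the detection state. -/
noncomputable def ResilientSup (f : X → E → Option X) (x0 : X) (Scv : Set E)
    (XS XR Bad : Set X) (Q : Set (Option X × X)) : Prop :=
  (∀ s ∈ Lang (subStep f XS) x0, embed s ∈ SRLang f x0 XS Scv Q) ∧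
  ∀ s : List E, embed s ∈ SRLang f x0 XS Scv Q →
    ∀ σ ∈ Scv, embed s ++ [Sum.inr σ] ∈ GRLang f x0 XS Scv →
      embed s ++ [Sum.inr σ] ∈ SRLang f x0 XS Scv Q ∧
      ∀ t : List E, embed s ++ [Sum.inr σ] ++ embed t ∈ SRLang f x0 XS Scv Q →
        (∀ t', t' <+: t → ∀ y, runFrom f x0 (s ++ σ :: t') = some y →
            y ∉ Bad) ∧
        ∃ u q, runFrom (subStep (grStep f XS Scv) Q) (grInit x0)
                 (embed s ++ [Sum.inr σ] ++ embed t ++ u) = some q ∧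
               q.1 = (none : Option X) ∧ q.2 ∈ XR

/-- A prefix-closed language. -/
def PrefixClosed (K : Set (List E)) : Prop := ∀ s t : List E, s ++ t ∈ K → s ∈ K

/-- `K` is controllable w.r.t. the language `M` and uncontrollable events `Suc`. -/
def ControllableLang (K M : Set (List E)) (Suc : Set E) : Prop :=
  ∀ s ∈ K, ∀ e ∈ Suc, s ++ [e] ∈ M → s ++ [e] ∈ K

/-- The supremal controllable (prefix-closed) sublanguage of `M` w.r.t. `LG`. -/
def supC (M LG : Set (List E)) (Suc : Set E) : Set (List E) :=
  ⋃₀ {K | K ⊆ M ∧ PrefixClosed K ∧ ControllableLang K LG Suc}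

/-! ### Auxiliary lemmas -/

section Aux

lemma runFrom_append (f : X → E → Option X) (x : X) (s t : List E) :
    runFrom f x (s ++ t) = (runFrom f x s).bind fun y => runFrom f y t := by
  induction s generalizing x with
  | nil => simp [runFrom]
  | cons e s ih =>
      simp only [List.cons_append, runFrom]
      cases f x e with
      | none => simp
      | some z => simp [ih]

lemma runFrom_prefix {f : X → E → Option X} {x y : X} {w t : List E}
    (ht : t <+: w) (h : runFrom f x w = some y) :
    ∃ z, runFrom f x t = some z := by
  obtain ⟨d, rfl⟩ := ht
  rw [runFrom_append] at h
  cases hz : runFrom f x t with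
  | none => rw [hz] at h; simp at h
  | some z => exact ⟨z, rfl⟩

lemma subStep_some {f : X → E → Option X} {Q : Set X} {x y : X} {e : E}
    (h : subStep f Q x e = some y) : f x e = some y ∧ x ∈ Q ∧ y ∈ Q := by
  unfold subStep at h
  cases hf : f x e with
  | none => rw [hf] at h; simp at h
  | some z =>
      rw [hf, Option.bind_some] at h
      by_cases hc : x ∈ Q ∧ z ∈ Q
      · rw [if_pos hc] at h
        obtain rfl := Option.some.inj h
        exact ⟨rfl, hc.1, hc.2⟩
      · rw [if_neg hc] at h; simp at h

lemma subStep_of_mem {f : X → E → Option X} {Q : Set X} {x y : X} {e : E}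
    (hf : f x e = some y) (hx : x ∈ Q) (hy : y ∈ Q) :
    subStep f Q x e = some y := by
  unfold subStep; rw [hf]; simp [hx, hy]

lemma runFrom_sub_some {f : X → E → Option X} {Q : Set X} {x y : X} {w : List E}
    (h : runFrom (subStep f Q) x w = some y) : runFrom f x w = some y := by
  induction w generalizing x with
  | nil => exact h
  | cons e w ih =>
      simp only [runFrom] at h ⊢
      cases hs : subStep f Q x e with
      | none => rw [hs] at h; simp at h
      | some z =>
          rw [hs] at h; simp only [Option.bind_some] at h
          rw [(subStep_some hs).1]
          simpa using ih h

lemma runFrom_sub_mem {f : X → E → Option X} {Q : Set X} {x y : X} {w : List E}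
    (hx : x ∈ Q) (h : runFrom (subStep f Q) x w = some y) : y ∈ Q := by
  induction w generalizing x with
  | nil => cases h; exact hx
  | cons e w ih =>
      simp only [runFrom] at h
      cases hs : subStep f Q x e with
      | none => rw [hs] at h; simp at h
      | some z =>
          rw [hs] at h; simp only [Option.bind_some] at h
          exact ih (subStep_some hs).2.2 h

lemma runFrom_sub_of_forall {f : X → E → Option X} {Q : Set X} {x y : X} {w : List E}
    (hx : x ∈ Q) (hall : ∀ t z, t <+: w → runFrom f x t = some z → z ∈ Q)
    (h : runFrom f x w = some y) : runFrom (subStep f Q) x w = some y := by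
  induction w generalizing x with
  | nil => exact h
  | cons e w ih =>
      simp only [runFrom] at h ⊢
      cases hf : f x e with
      | none => rw [hf] at h; simp at h
      | some z =>
          rw [hf] at h; simp only [Option.bind_some] at h
          have hz : z ∈ Q := by
            refine hall [e] z ⟨w, rfl⟩ ?_
            simp [runFrom, hf]
          rw [subStep_of_mem hf hx hz]
          simp only [Option.bind_some]
          refine ih hz (fun t z' ht hr => ?_) h
          refine hall (e :: t) z' (by obtain ⟨d, rfl⟩ := ht; exact ⟨d, rfl⟩) ?_
          simp [runFrom, hf, hr]

lemma prefix_of_prefix_map {α β : Type*} {g : α → β} {l : List α} {t : List β}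
    (h : t <+: l.map g) : ∃ t₀, t₀ <+: l ∧ t = t₀.map g := by
  obtain ⟨d, hd⟩ := h
  refine ⟨l.take t.length, List.take_prefix _ _, ?_⟩
  have h2 : (l.map g).take t.length = t := by rw [← hd, List.take_left]
  rw [List.map_take, h2]

/-- Projection of attacked events to plain events. -/
def projE : (E ⊕ E) → E := Sum.elim id id

lemma grStep_diag_inl (f : X → E → Option X) (XS : Set X) (Scv : Set E) (x : X) (e : E) :
    grStep f XS Scv (some x, x) (Sum.inl e) =
      (subStep f XS x e).map (fun y => (some y, y)) := by
  cases hs : subStep f XS x e with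
  | none =>
      have : (f x e).bind (fun y => if x ∈ XS ∧ y ∈ XS then some y else none) = none := hs
      simp only [grStep, prodStep, saStep, gaStep, hs]
      simp
  | some y =>
      have hf := (subStep_some hs).1
      simp [grStep, prodStep, saStep, gaStep, hs, hf]

lemma runFrom_gr_diag (f : X → E → Option X) (XS : Set X) (Scv : Set E) (x : X)
    (s : List E) :
    runFrom (grStep f XS Scv) (some x, x) (embed s) =
      (runFrom (subStep f XS) x s).map (fun y => (some y, y)) := by
  induction s generalizing x with
  | nil => simp [embed, runFrom]
  | cons e s ih =>
      simp only [embed, List.map_cons, runFrom, grStep_diag_inl]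
      cases subStep f XS x e with
      | none => simp
      | some y => simpa [embed] using ih y

lemma grStep_none_inl (f : X → E → Option X) (XS : Set X) (Scv : Set E) (x : X) (e : E) :
    grStep f XS Scv ((none : Option X), x) (Sum.inl e) =
      (f x e).map (fun y => ((none : Option X), y)) := by
  simp [grStep, prodStep, saStep, gaStep]

lemma grStep_none (f : X → E → Option X) (XS : Set X) (Scv : Set E) {x : X}
    {a : E ⊕ E} {p : Option X × X}
    (h : grStep f XS Scv ((none : Option X), x) a = some p) :
    ∃ y, p = ((none : Option X), y) ∧ f x (projE a) = some y := by
  cases a with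
  | inl e =>
      rw [grStep_none_inl] at h
      cases hf : f x e with
      | none => rw [hf] at h; simp at h
      | some y =>
          rw [hf] at h
          exact ⟨y, (Option.some.inj h).symm, hf⟩
  | inr e =>
      simp only [grStep, prodStep, saStep, gaStep] at h
      by_cases he : e ∈ Scv
      · rw [if_pos he] at h
        cases hf : f x e with
        | none => rw [hf] at h; simp at h
        | some y =>
            rw [hf] at h; simp only [Option.bind_some, Option.map_some] at h
            refine ⟨y, (Option.some.inj h).symm, hf⟩
      · rw [if_neg he] at h; simp at h

lemma runFrom_gr_none_embed (f : X → E → Option X) (XS : Set X) (Scv : Set E) (x : X)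
    (t : List E) :
    runFrom (grStep f XS Scv) ((none : Option X), x) (embed t) =
      (runFrom f x t).map (fun y => ((none : Option X), y)) := by
  induction t generalizing x with
  | nil => simp [embed, runFrom]
  | cons e t ih =>
      simp only [embed, List.map_cons, runFrom, grStep_none_inl]
      cases f x e with
      | none => simp
      | some y => simpa [embed] using ih y

lemma runFrom_gr_none_proj {f : X → E → Option X} {XS : Set X} {Scv : Set E} {x : X}
    {w : List (E ⊕ E)} {p : Option X × X}
    (h : runFrom (grStep f XS Scv) ((none : Option X), x) w = some p) :
    p.1 = none ∧ runFrom f x (w.map projE) = some p.2 := by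
  induction w generalizing x with
  | nil => cases h; exact ⟨rfl, rfl⟩
  | cons a w ih =>
      simp only [runFrom] at h
      cases hs : grStep f XS Scv ((none : Option X), x) a with
      | none => rw [hs] at h; simp at h
      | some q =>
          rw [hs, Option.bind_some] at h
          obtain ⟨y, rfl, hf⟩ := grStep_none f XS Scv hs
          have := ih h
          simpa [runFrom, hf] using this

lemma sub_gr_none_replace {f : X → E → Option X} {XS : Set X} {Scv : Set E}
    {Q : Set (Option X × X)} {x : X} {w : List (E ⊕ E)} {q : Option X × X}
    (h : runFrom (subStep (grStep f XS Scv) Q) ((none : Option X), x) w = some q) :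
    runFrom (subStep (grStep f XS Scv) Q) ((none : Option X), x)
      (embed (w.map projE)) = some q := by
  induction w generalizing x with
  | nil => simpa [embed] using h
  | cons a w ih =>
      simp only [runFrom] at h
      cases hs : subStep (grStep f XS Scv) Q ((none : Option X), x) a with
      | none => rw [hs] at h; simp at h
      | some p =>
          rw [hs, Option.bind_some] at h
          obtain ⟨hg, hxQ, hpQ⟩ := subStep_some hs
          obtain ⟨y, rfl, hf⟩ := grStep_none f XS Scv hg
          have hstep : subStep (grStep f XS Scv) Q ((none : Option X), x)
              (Sum.inl (projE a)) = some ((none : Option X), y) := by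
            refine subStep_of_mem ?_ hxQ hpQ
            rw [grStep_none_inl, hf]; rfl
          simp only [embed, List.map_cons, List.map_cons, runFrom, hstep,
            Option.bind_some]
          exact ih h

lemma run_Q_none_suc {f : X → E → Option X} {XS : Set X} {Scv Suc : Set E}
    {Q : Set (Option X × X)}
    (hctrl : ∀ p ∈ Q, ∀ e ∈ Suc, ∀ q', grStep f XS Scv p (Sum.inl e) = some q' → q' ∈ Q)
    {x y : X} {u : List E} (hx : ((none : Option X), x) ∈ Q)
    (hu : ∀ e ∈ u, e ∈ Suc) (hr : runFrom f x u = some y) :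
    runFrom (subStep (grStep f XS Scv) Q) ((none : Option X), x) (embed u) =
      some ((none : Option X), y) := by
  induction u generalizing x with
  | nil => cases hr; rfl
  | cons e u ih =>
      simp only [runFrom] at hr
      cases hf : f x e with
      | none => rw [hf] at hr; simp at hr
      | some z =>
          rw [hf, Option.bind_some] at hr
          have hg : grStep f XS Scv ((none : Option X), x) (Sum.inl e) =
              some ((none : Option X), z) := by
            rw [grStep_none_inl, hf]; rfl
          have hzQ : ((none : Option X), z) ∈ Q :=
            hctrl _ hx e (hu e List.mem_cons_self) _ hg
          have hstep := subStep_of_mem hg hx hzQ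
          simp only [embed, List.map_cons, runFrom, hstep, Option.bind_some]
          exact ih hzQ (fun e' he' => hu e' (List.mem_cons_of_mem _ he')) hr

lemma grInit_eq (x0 : X) : grInit x0 = ((some x0 : Option X), x0) := rfl

lemma runFrom_singleton {X' A : Type*} (g : X' → A → Option X') (p : X') (a : A) :
    runFrom g p [a] = g p a := by
  cases h : g p a <;> simp [runFrom, h]

lemma grStep_diag_inr {f : X → E → Option X} {XS : Set X} {Scv : Set E}
    {x : X} {e : E} {p : Option X × X}
    (h : grStep f XS Scv (some x, x) (Sum.inr e) = some p) :
    e ∈ Scv ∧ x ∈ XS ∧ subStep f XS x e = none ∧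
      ∃ y, f x e = some y ∧ p = ((none : Option X), y) := by
  simp only [grStep, prodStep, saStep] at h
  by_cases hc : e ∈ Scv ∧ x ∈ XS ∧ subStep f XS x e = none
  · rw [if_pos hc, Option.bind_some] at h
    simp only [gaStep, if_pos hc.1] at h
    cases hf : f x e with
    | none => rw [hf] at h; simp at h
    | some y =>
        rw [hf] at h
        exact ⟨hc.1, hc.2.1, hc.2.2, y, rfl, (Option.some.inj h).symm⟩
  · rw [if_neg hc] at h; simp at h

lemma grStep_diag_inr_of {f : X → E → Option X} {XS : Set X} {Scv : Set E}
    {x y : X} {e : E} (he : e ∈ Scv) (hx : x ∈ XS)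
    (hsub : subStep f XS x e = none) (hf : f x e = some y) :
    grStep f XS Scv (some x, x) (Sum.inr e) = some ((none : Option X), y) := by
  simp [grStep, prodStep, saStep, gaStep, he, hx, hsub, hf]

lemma gr_attack_run {f : X → E → Option X} {XS : Set X} {Scv : Set E} {x0 : X}
    {s : List E} {σ : E} {t : List E} {p : Option X × X}
    (h : runFrom (grStep f XS Scv) (grInit x0)
        (embed s ++ [Sum.inr σ] ++ embed t) = some p) :
    ∃ xs yd, runFrom (subStep f XS) x0 s = some xs ∧ σ ∈ Scv ∧ xs ∈ XS ∧
      subStep f XS xs σ = none ∧ f xs σ = some yd ∧ runFrom f yd t = some p.2 ∧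
      p.1 = none ∧ runFrom f x0 (s ++ σ :: t) = some p.2 := by
  rw [runFrom_append] at h
  cases h1 : runFrom (grStep f XS Scv) (grInit x0) (embed s ++ [Sum.inr σ]) with
  | none => rw [h1] at h; simp at h
  | some p1 =>
      rw [h1, Option.bind_some] at h
      rw [runFrom_append, grInit_eq, runFrom_gr_diag] at h1
      cases h2 : runFrom (subStep f XS) x0 s with
      | none => rw [h2] at h1; simp at h1
      | some xs =>
          rw [h2] at h1
          simp only [Option.map_some, Option.bind_some] at h1
          rw [runFrom_singleton] at h1
          obtain ⟨hσ, hxs, hsub, y, hf, rfl⟩ := grStep_diag_inr h1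
          rw [runFrom_gr_none_embed] at h
          cases h3 : runFrom f y t with
          | none => rw [h3] at h; simp at h
          | some z =>
              rw [h3] at h
              obtain rfl := (Option.some.inj h)
              have hfx0s : runFrom f x0 s = some xs := runFrom_sub_some h2
              refine ⟨xs, y, rfl, hσ, hxs, hsub, hf, h3, rfl, ?_⟩
              rw [show s ++ σ :: t = s ++ ([σ] ++ t) from rfl, runFrom_append,
                hfx0s, Option.bind_some, runFrom_append, runFrom_singleton, hf,
                Option.bind_some]
              exact h3

lemma gr_attack_run_of {f : X → E → Option X} {XS : Set X} {Scv : Set E} {x0 : X}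
    {s : List E} {σ : E} {t : List E} {xs yd z : X}
    (h2 : runFrom (subStep f XS) x0 s = some xs) (hσ : σ ∈ Scv) (hxs : xs ∈ XS)
    (hsub : subStep f XS xs σ = none) (hf : f xs σ = some yd)
    (h3 : runFrom f yd t = some z) :
    runFrom (grStep f XS Scv) (grInit x0) (embed s ++ [Sum.inr σ] ++ embed t) =
      some ((none : Option X), z) := by
  rw [runFrom_append, runFrom_append, grInit_eq, runFrom_gr_diag, h2]
  simp only [Option.map_some, Option.bind_some]
  rw [runFrom_singleton, grStep_diag_inr_of hσ hxs hsub hf, Option.bind_some,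
    runFrom_gr_none_embed, h3]
  rfl

/-- Composition of `runFrom` along `s ++ σ :: (t ++ t')`. -/
lemma runFrom_attack_comp {f : X → E → Option X} {x0 x y : X} {s : List E}
    {σ : E} {t t' : List E} (h1 : runFrom f x0 (s ++ σ :: t) = some x)
    (h2 : runFrom f x t' = some y) :
    runFrom f x0 (s ++ σ :: (t ++ t')) = some y := by
  have : s ++ σ :: (t ++ t') = (s ++ σ :: t) ++ t' := by simp
  rw [this, runFrom_append, h1, Option.bind_some]
  exact h2

/-! ### Lemmas about `recSet` -/

lemma IsRecoveryPath.mono {f : X → E → Option X} {Suc : Set E} {XR Bad R R' : Set X}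
    (hRR : R ⊆ R') {x : X} {r : List E}
    (h : IsRecoveryPath f Suc XR Bad R x r) : IsRecoveryPath f Suc XR Bad R' x r :=
  ⟨h.1, h.2.1, h.2.2.1, fun t ht e he y hy hnp => hRR (h.2.2.2 t ht e he y hy hnp)⟩

lemma recSet_subset_compl {f : X → E → Option X} {Suc : Set E} {XR Bad : Set X} :
    recSet f Suc XR Bad ⊆ Badᶜ := by
  rintro x ⟨R, ⟨hR, -⟩, hx⟩
  exact hR hx

lemma recSet_path {f : X → E → Option X} {Suc : Set E} {XR Bad : Set X} {x : X}
    (hx : x ∈ recSet f Suc XR Bad) :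
    ∃ r, IsRecoveryPath f Suc XR Bad (recSet f Suc XR Bad) x r := by
  obtain ⟨R, hR, hxR⟩ := hx
  obtain ⟨r, hr⟩ := hR.2 x hxR
  exact ⟨r, hr.mono (Set.subset_sUnion_of_mem hR)⟩

lemma recSet_along {f : X → E → Option X} {Suc : Set E} {XR Bad : Set X}
    {x : X} {r t : List E} {y : X}
    (hx : x ∈ recSet f Suc XR Bad)
    (hr : IsRecoveryPath f Suc XR Bad (recSet f Suc XR Bad) x r)
    (ht : t <+: r) (hy : runFrom f x t = some y) : y ∈ recSet f Suc XR Bad := by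
  set RS := recSet f Suc XR Bad with hRS
  set R' : Set X := {y | ∃ x ∈ RS, ∃ r t, IsRecoveryPath f Suc XR Bad RS x r ∧
    t <+: r ∧ runFrom f x t = some y} with hR'
  have hRsub : RS ⊆ R' := by
    intro z hz
    obtain ⟨r0, hr0⟩ := recSet_path hz
    exact ⟨z, hz, r0, [], hr0, ⟨r0, rfl⟩, rfl⟩
  have hfam : R' ∈ {R | R ⊆ Badᶜ ∧ ∀ x ∈ R, ∃ r, IsRecoveryPath f Suc XR Bad R x r} := by
    constructor
    · rintro z ⟨x1, hx1, r1, t1, hp1, ht1, hz1⟩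
      exact hp1.2.1 t1 ht1 z hz1
    · rintro z ⟨x1, hx1, r1, t1, hp1, ht1, hz1⟩
      obtain ⟨d, rfl⟩ := ht1
      refine ⟨d, ?_, ?_, ?_, ?_⟩
      · obtain ⟨w, hw, hwr⟩ := hp1.1
        rw [runFrom_append, hz1, Option.bind_some] at hwr
        exact ⟨w, hw, hwr⟩
      · intro t' ht' y' hy'
        refine hp1.2.1 (t1 ++ t') ?_ y' ?_
        · obtain ⟨d', rfl⟩ := ht'
          exact ⟨d', by rw [List.append_assoc]⟩
        · rw [runFrom_append, hz1, Option.bind_some]; exact hy'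
      · intro t' ht' u hu y' hy'
        refine hp1.2.2.1 (t1 ++ t') ?_ u hu y' ?_
        · obtain ⟨d', rfl⟩ := ht'
          exact ⟨d', by rw [List.append_assoc]⟩
        · rw [List.append_assoc, runFrom_append, hz1, Option.bind_some]; exact hy'
      · intro t' ht' e he y' hy' hnp
        have hrun : runFrom f x1 ((t1 ++ t') ++ [e]) = some y' := by
          rw [List.append_assoc, runFrom_append, hz1, Option.bind_some]; exact hy'
        by_cases hcase : (t1 ++ t') ++ [e] <+: t1 ++ d
        · exact ⟨x1, hx1, t1 ++ d, (t1 ++ t') ++ [e], hp1, hcase, hrun⟩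
        · refine hRsub (hp1.2.2.2 (t1 ++ t') ?_ e he y' hrun hcase)
          obtain ⟨d', rfl⟩ := ht'
          exact ⟨d', by rw [List.append_assoc]⟩
  have hR'sub : R' ⊆ RS := Set.subset_sUnion_of_mem hfam
  exact hR'sub ⟨x, hx, r, t, hr, ht, hy⟩

lemma recSet_suc {f : X → E → Option X} {Suc : Set E} {XR Bad : Set X}
    {x y : X} {e : E} (hx : x ∈ recSet f Suc XR Bad) (he : e ∈ Suc)
    (hf : f x e = some y) : y ∈ recSet f Suc XR Bad := by
  obtain ⟨r, hr⟩ := recSet_path hx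
  have hrun : runFrom f x [e] = some y := by simp [runFrom, hf]
  by_cases hp : [e] <+: r
  · exact recSet_along hx hr hp hrun
  · have := hr.2.2.2 [] ⟨r, rfl⟩ e he y (by simpa using hrun) (by simpa using hp)
    exact this

/-! ### Forward direction: a resilient supervisor yields recoverability -/

lemma resilient_imp_rec {f : X → E → Option X} {x0 : X} {Suc Scv : Set E}
    {XUS XS XR : Set X} {Q : Set (Option X × X)}
    (hQ : IsGRSupervisor f x0 Suc Scv XS Q)
    (hres : ResilientSup f x0 Scv XS XR (vulnStates f Scv ∪ XUS) Q) :
    AERobustRecoverable f x0 Suc Scv XUS XS XR := by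
  intro xd hxd
  obtain ⟨w, hw, hrun⟩ := hxd
  obtain ⟨s, σ, rfl, hσ, hwG, hsS, hatt⟩ := hw
  have hsem := hres.1 s hsS
  have h2 := hres.2 s hsem σ hσ hatt
  have hattS : embed s ++ [Sum.inr σ] ++ embed ([] : List E) ∈
      SRLang f x0 XS Scv Q := by simpa [embed] using h2.1
  refine ⟨{x | ∃ s' σ' t', σ' ∈ Scv ∧ embed s' ∈ SRLang f x0 XS Scv Q ∧
      embed s' ++ [Sum.inr σ'] ∈ GRLang f x0 XS Scv ∧
      embed s' ++ [Sum.inr σ'] ++ embed t' ∈ SRLang f x0 XS Scv Q ∧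
      runFrom f x0 (s' ++ σ' :: t') = some x}, ⟨?_, ?_⟩,
    ⟨s, σ, [], hσ, hsem, hatt, hattS, hrun⟩⟩
  · rintro x ⟨s', σ', t', hσ', hsem', hatt', hfull', hrunx⟩
    exact ((hres.2 s' hsem' σ' hσ' hatt').2 t' hfull').1 t' (List.prefix_refl t') x hrunx
  · rintro x ⟨s', σ', t', hσ', hsem', hatt', hfull', hrunx⟩
    have hcore := (hres.2 s' hsem' σ' hσ' hatt').2
    obtain ⟨u, q, hu, hq1, hqXR⟩ := (hcore t' hfull').2
    obtain ⟨p, hp⟩ := Option.isSome_iff_exists.mp hfull'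
    have hpQ : p ∈ Q := runFrom_sub_mem hQ.init_mem hp
    have hgr := runFrom_sub_some hp
    obtain ⟨xs, yd, -, -, -, -, -, -, hp1, hpr⟩ := gr_attack_run hgr
    have hxp : p.2 = x := Option.some.inj (hpr.symm.trans hrunx)
    have hpEq : p = ((none : Option X), x) := by rw [← hp1, ← hxp]
    rw [hpEq] at hp hpQ
    have hu2 : runFrom (subStep (grStep f XS Scv) Q) ((none : Option X), x) u =
        some q := by
      rw [runFrom_append, hp, Option.bind_some] at hu
      exact hu
    have hru := sub_gr_none_replace hu2
    -- composition helper
    have compose : ∀ T (y : X),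
        runFrom (subStep (grStep f XS Scv) Q) ((none : Option X), x) (embed T) =
          some ((none : Option X), y) →
        runFrom (subStep (grStep f XS Scv) Q) (grInit x0)
          (embed s' ++ [Sum.inr σ'] ++ embed (t' ++ T)) =
          some ((none : Option X), y) := by
      intro T y hT
      have hsplit : embed s' ++ [Sum.inr σ'] ++ embed (t' ++ T) =
          (embed s' ++ [Sum.inr σ'] ++ embed t') ++ embed T := by
        simp [embed]
      rw [hsplit, runFrom_append, hp, Option.bind_some]
      exact hT
    -- values of prefix runs
    have qprefix : ∀ t'' (y : X), t'' <+: u.map projE → runFrom f x t'' = some y →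
        runFrom (subStep (grStep f XS Scv) Q) ((none : Option X), x) (embed t'') =
          some ((none : Option X), y) := by
      intro t'' y ht'' hy
      obtain ⟨p', hp'⟩ := runFrom_prefix (show embed t'' <+: embed (u.map projE) from ht''.map Sum.inl) hru
      have := runFrom_sub_some hp'
      rw [runFrom_gr_none_embed, hy] at this
      rw [hp', ← Option.some.inj this]
    refine ⟨u.map projE, ?_, ?_, ?_, ?_⟩
    · -- reaches XR
      have hgrr := runFrom_sub_some hru
      rw [runFrom_gr_none_embed] at hgrr
      cases hfr : runFrom f x (u.map projE) with
      | none => rw [hfr] at hgrr; simp at hgrr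
      | some z =>
          rw [hfr] at hgrr
          have hqz : q = ((none : Option X), z) := (Option.some.inj hgrr).symm
          exact ⟨z, by rw [hqz] at hqXR; exact hqXR, rfl⟩
    · -- prefixes avoid Bad
      intro t'' ht'' y hy
      have hQr := qprefix t'' y ht'' hy
      have hmem : embed s' ++ [Sum.inr σ'] ++ embed (t' ++ t'') ∈
          SRLang f x0 XS Scv Q :=
        Option.isSome_iff_exists.mpr ⟨_, compose t'' y hQr⟩
      exact (hcore (t' ++ t'') hmem).1 (t' ++ t'') (List.prefix_refl _) y
        (runFrom_attack_comp hrunx hy)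
    · -- uncontrollable continuations avoid Bad
      intro t'' ht'' u' hu' y hy
      rw [runFrom_append] at hy
      cases hy1 : runFrom f x t'' with
      | none => rw [hy1] at hy; simp at hy
      | some y1 =>
          rw [hy1, Option.bind_some] at hy
          have hQr := qprefix t'' y1 ht'' hy1
          have hQfull := compose t'' y1 hQr
          have hy1Q : ((none : Option X), y1) ∈ Q :=
            runFrom_sub_mem hQ.init_mem hQfull
          have hsuc := run_Q_none_suc hQ.controllable hy1Q hu' hy
          have hQT : runFrom (subStep (grStep f XS Scv) Q) ((none : Option X), x)
              (embed (t'' ++ u')) = some ((none : Option X), y) := by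
            rw [show embed (t'' ++ u') = embed t'' ++ embed u' by simp [embed],
              runFrom_append, hQr, Option.bind_some]
            exact hsuc
          have hmem : embed s' ++ [Sum.inr σ'] ++ embed (t' ++ (t'' ++ u')) ∈
              SRLang f x0 XS Scv Q :=
            Option.isSome_iff_exists.mpr ⟨_, compose (t'' ++ u') y hQT⟩
          have hcomp : runFrom f x0 (s' ++ σ' :: (t' ++ (t'' ++ u'))) = some y := by
            refine runFrom_attack_comp hrunx ?_
            rw [runFrom_append, hy1, Option.bind_some]; exact hy
          exact (hcore (t' ++ (t'' ++ u')) hmem).1 _ (List.prefix_refl _) y hcomp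
    · -- uncontrollable deviations stay recoverable
      intro t'' ht'' e he y hy hnp
      rw [runFrom_append] at hy
      cases hy1 : runFrom f x t'' with
      | none => rw [hy1] at hy; simp at hy
      | some y1 =>
          rw [hy1, Option.bind_some] at hy
          have hQr := qprefix t'' y1 ht'' hy1
          have hQfull := compose t'' y1 hQr
          have hy1Q : ((none : Option X), y1) ∈ Q :=
            runFrom_sub_mem hQ.init_mem hQfull
          have hsuc := run_Q_none_suc hQ.controllable hy1Q
            (by intro e' he'; rw [List.mem_singleton] at he'; exact he' ▸ he) hy
          have hQT : runFrom (subStep (grStep f XS Scv) Q) ((none : Option X), x)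
              (embed (t'' ++ [e])) = some ((none : Option X), y) := by
            rw [show embed (t'' ++ [e]) = embed t'' ++ embed [e] by simp [embed],
              runFrom_append, hQr, Option.bind_some]
            exact hsuc
          have hmem : embed s' ++ [Sum.inr σ'] ++ embed (t' ++ (t'' ++ [e])) ∈
              SRLang f x0 XS Scv Q :=
            Option.isSome_iff_exists.mpr ⟨_, compose (t'' ++ [e]) y hQT⟩
          have hcomp : runFrom f x0 (s' ++ σ' :: (t' ++ (t'' ++ [e]))) = some y := by
            refine runFrom_attack_comp hrunx ?_
            rw [runFrom_append, hy1, Option.bind_some]; exact hy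
          exact ⟨s', σ', t' ++ (t'' ++ [e]), hσ', hsem', hatt', hmem, hcomp⟩

/-! ### Backward direction: recoverability yields a resilient supervisor -/

lemma rec_imp_resilient {f : X → E → Option X} {x0 : X} {Suc Scv : Set E}
    {XUS XS XR : Set X}
    (hrec : AERobustRecoverable f x0 Suc Scv XUS XS XR) :
    ∃ Q : Set (Option X × X), IsGRSupervisor f x0 Suc Scv XS Q ∧
      ResilientSup f x0 Scv XS XR (vulnStates f Scv ∪ XUS) Q := by
  classical
  set Bad : Set X := vulnStates f Scv ∪ XUS with hBad
  set RS : Set X := recSet f Suc XR Bad with hRS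
  set Q : Set (Option X × X) :=
    {p | ∃ x s, runFrom (subStep f XS) x0 s = some x ∧ p = ((some x : Option X), x)} ∪
    {p | ∃ x, p = ((none : Option X), x) ∧ x ∈ RS ∧
      ∃ w, runFrom (grStep f XS Scv) (grInit x0) w = some p} with hQdef
  have hQinit : grInit x0 ∈ Q := Or.inl ⟨x0, [], rfl, rfl⟩
  have hnone : ∀ z : X, ((none : Option X), z) ∈ Q → z ∈ RS ∧
      ∃ w, runFrom (grStep f XS Scv) (grInit x0) w = some ((none : Option X), z) := by
    rintro z (⟨x, s, hs, heq⟩ | ⟨x, heq, hx, hw⟩)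
    · simp at heq
    · rw [Prod.mk.injEq] at heq
      obtain ⟨-, rfl⟩ := heq
      exact ⟨hx, hw⟩
  have hQsup : IsGRSupervisor f x0 Suc Scv XS Q := by
    refine ⟨?_, hQinit, ?_⟩
    · rintro p (⟨x, s, hs, rfl⟩ | ⟨x, rfl, hx, w, hw⟩)
      · exact ⟨embed s, by rw [grInit_eq, runFrom_gr_diag, hs]; rfl⟩
      · exact ⟨w, hw⟩
    · rintro p hp e he q hstep
      rcases hp with ⟨x, s, hs, rfl⟩ | ⟨x, rfl, hx, w, hw⟩
      · rw [grStep_diag_inl] at hstep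
        cases hsub : subStep f XS x e with
        | none => rw [hsub] at hstep; simp at hstep
        | some y =>
            rw [hsub] at hstep
            refine Or.inl ⟨y, s ++ [e], ?_, (Option.some.inj hstep).symm⟩
            rw [runFrom_append, hs, Option.bind_some, runFrom_singleton]
            exact hsub
      · rw [grStep_none_inl] at hstep
        cases hf : f x e with
        | none => rw [hf] at hstep; simp at hstep
        | some y =>
            rw [hf] at hstep
            obtain rfl := (Option.some.inj hstep)
            refine Or.inr ⟨y, rfl, recSet_suc hx he hf, w ++ [Sum.inl e], ?_⟩
            rw [runFrom_append, hw, Option.bind_some, runFrom_singleton,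
              grStep_none_inl, hf]
            rfl
  refine ⟨Q, hQsup, ?_, ?_⟩
  · -- nominal behavior is permitted
    intro s hsS
    obtain ⟨xs, hxs⟩ := Option.isSome_iff_exists.mp hsS
    have hgrun : runFrom (grStep f XS Scv) (grInit x0) (embed s) =
        some ((some xs : Option X), xs) := by
      rw [grInit_eq, runFrom_gr_diag, hxs]
      rfl
    refine Option.isSome_iff_exists.mpr ⟨_, runFrom_sub_of_forall hQinit ?_ hgrun⟩
    intro t z ht hz
    obtain ⟨t₀, ht₀, rfl⟩ :=
      prefix_of_prefix_map (show t <+: List.map Sum.inl s from ht)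
    rw [show List.map Sum.inl t₀ = embed t₀ from rfl, grInit_eq,
      runFrom_gr_diag] at hz
    cases hz0 : runFrom (subStep f XS) x0 t₀ with
    | none => rw [hz0] at hz; simp at hz
    | some y =>
        rw [hz0] at hz
        exact Or.inl ⟨y, t₀, hz0, (Option.some.inj hz).symm⟩
  · -- reaction to attacks
    intro s hsem σ hσ hatt
    obtain ⟨ps, hps⟩ := Option.isSome_iff_exists.mp hsem
    have hpsQ : ps ∈ Q := runFrom_sub_mem hQinit hps
    have hgs := runFrom_sub_some hps
    obtain ⟨p2, hp2⟩ := Option.isSome_iff_exists.mp hatt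
    have hp2' : runFrom (grStep f XS Scv) (grInit x0)
        (embed s ++ [Sum.inr σ] ++ embed ([] : List E)) = some p2 := by
      simpa [embed] using hp2
    obtain ⟨xs', yd, hxs', hσ2, hxsXS, hsubnone, hfσ, hyd0, hp21, hrunsσ⟩ :=
      gr_attack_run hp2'
    have hpsEq : ps = ((some xs' : Option X), xs') := by
      rw [grInit_eq, runFrom_gr_diag, hxs'] at hgs
      exact (Option.some.inj hgs).symm
    rw [hpsEq] at hps hpsQ
    have hydEq : p2.2 = yd := (Option.some.inj hyd0).symm
    have hrunyd : runFrom f x0 (s ++ [σ]) = some yd := by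
      rw [← hydEq]
      exact hrunsσ
    have hdet : yd ∈ detStates f x0 XS Scv := by
      refine ⟨s ++ [σ], ⟨s, σ, rfl, hσ,
        Option.isSome_iff_exists.mpr ⟨yd, hrunyd⟩,
        Option.isSome_iff_exists.mpr ⟨xs', hxs'⟩, hatt⟩, hrunyd⟩
    have hydRS : yd ∈ RS := hrec hdet
    have hp2Eq : p2 = ((none : Option X), yd) := by rw [← hp21, ← hydEq]
    rw [hp2Eq] at hp2
    have hydQ : ((none : Option X), yd) ∈ Q :=
      Or.inr ⟨yd, rfl, hydRS, embed s ++ [Sum.inr σ], hp2⟩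
    have hQAtt : runFrom (subStep (grStep f XS Scv) Q) (grInit x0)
        (embed s ++ [Sum.inr σ]) = some ((none : Option X), yd) := by
      rw [runFrom_append, hps, Option.bind_some, runFrom_singleton]
      exact subStep_of_mem (grStep_diag_inr_of hσ hxsXS hsubnone hfσ) hpsQ hydQ
    refine ⟨Option.isSome_iff_exists.mpr ⟨_, hQAtt⟩, ?_⟩
    intro t hfull
    obtain ⟨pt, hpt⟩ := Option.isSome_iff_exists.mp hfull
    have hptQ : pt ∈ Q := runFrom_sub_mem hQinit hpt
    have hpt2 : runFrom (subStep (grStep f XS Scv) Q) ((none : Option X), yd)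
        (embed t) = some pt := by
      rw [runFrom_append, hQAtt, Option.bind_some] at hpt
      exact hpt
    have hgrt := runFrom_sub_some hpt2
    rw [runFrom_gr_none_embed] at hgrt
    cases hzt : runFrom f yd t with
    | none => rw [hzt] at hgrt; simp at hgrt
    | some zt =>
        rw [hzt] at hgrt
        have hptEq : pt = ((none : Option X), zt) := (Option.some.inj hgrt).symm
        rw [hptEq] at hptQ hpt
        constructor
        · -- prefixes avoid Bad
          intro t1 ht1 y hy
          have hy' : runFrom f yd t1 = some y := by
            have hsh : s ++ σ :: t1 = (s ++ [σ]) ++ t1 := by simp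
            rw [hsh, runFrom_append, hrunyd, Option.bind_some] at hy
            exact hy
          obtain ⟨p', hp'⟩ :=
            runFrom_prefix (show embed t1 <+: embed t from ht1.map Sum.inl) hpt2
          have hp'Q := runFrom_sub_mem hydQ hp'
          have hval := runFrom_sub_some hp'
          rw [runFrom_gr_none_embed, hy'] at hval
          rw [← Option.some.inj hval] at hp'Q
          exact recSet_subset_compl (hnone y hp'Q).1
        · -- extension to the robust region
          have hztRS : zt ∈ RS := (hnone zt hptQ).1
          obtain ⟨w0, hw0⟩ := (hnone zt hptQ).2
          obtain ⟨r, hr⟩ := recSet_path hztRS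
          obtain ⟨zXR, hzXR, hrunr⟩ := hr.1
          have hQr : runFrom (subStep (grStep f XS Scv) Q) ((none : Option X), zt)
              (embed r) = some ((none : Option X), zXR) := by
            refine runFrom_sub_of_forall hptQ ?_ ?_
            · intro t1 z ht1 hz
              obtain ⟨t₀, ht₀, rfl⟩ :=
                prefix_of_prefix_map (show t1 <+: List.map Sum.inl r from ht1)
              rw [show List.map Sum.inl t₀ = embed t₀ from rfl,
                runFrom_gr_none_embed] at hz
              cases hz0 : runFrom f zt t₀ with
              | none => rw [hz0] at hz; simp at hz
              | some z0 =>
                  rw [hz0] at hz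
                  obtain rfl := (Option.some.inj hz)
                  refine Or.inr ⟨z0, rfl, recSet_along hztRS hr ht₀ hz0,
                    w0 ++ embed t₀, ?_⟩
                  rw [runFrom_append, hw0, Option.bind_some,
                    runFrom_gr_none_embed, hz0]
                  rfl
            · rw [runFrom_gr_none_embed, hrunr]
              rfl
          refine ⟨embed r, ((none : Option X), zXR), ?_, rfl, hzXR⟩
          rw [runFrom_append, hpt, Option.bind_some]
          exact hQr

end Aux

end RobustRec

/-- Theorem 2 of the paper. There exists a resilient
supervisor `S^R` for the attacked closed-loop system `G^R` w.r.t. `Σ_{c,v}` and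
`G_robust` iff the attacked system `Sa/Ga` is AE-robust recoverable w.r.t.
`G_robust`. -/
theorem RobustRec.exists_resilient_iff_AERobustRecoverable
    {X E : Type*} [Fintype X] [Fintype E]
    (f : X → E → Option X) (x0 : X) (Sc Suc Scv : Set E) (XUS XS XR : Set X)
    (hdisj : Sc ∩ Suc = ∅) (hcover : Sc ∪ Suc = Set.univ) (hScv : Scv ⊆ Sc)
    (hS : IsSupervisor f x0 Suc XUS XS)
    (hXR : XR ∩ (vulnStates f Scv ∪ XUS) = ∅) :
    (∃ Q : Set (Option X × X), IsGRSupervisor f x0 Suc Scv XS Q ∧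
        ResilientSup f x0 Scv XS XR (vulnStates f Scv ∪ XUS) Q) ↔
      AERobustRecoverable f x0 Suc Scv XUS XS XR := by
  constructor
  · rintro ⟨Q, hQ, hres⟩
    exact resilient_imp_rec hQ hres
  · intro hrec
    exact rec_imp_resilient hrec
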